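/- Let P be positive definite with PA + A'P ≤ 0 and suppose (C, A) is detectable. Then every solution ε of ε̇ = (A - αP⁻¹C'C)ε with α > 0 converges to 0 as t → ∞. -/

import Mathlib

open Matrix Filter Topology NormedSpace

attribute [local instance] Matrix.linftyOpNormedAddCommGroup Matrix.linftyOpNormedRing
  Matrix.linftyOpNormedAlgebra

section aux
variable {n p : ℕ}

lemma my_hasDerivAt_mulVec {x : ℝ → Fin n → ℝ} {x' : Fin n → ℝ} {t : ℝ} {m : ℕ}
    (Q : Matrix (Fin m) (Fin n) ℝ) (hx : HasDerivAt x x' t) :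
    HasDerivAt (fun s => Q *ᵥ x s) (Q *ᵥ x') t := by
  rw [hasDerivAt_pi] at hx ⊢
  intro i
  simpa [mulVec, dotProduct] using HasDerivAt.fun_sum (fun j _ => (hx j).const_mul (Q i j))

lemma my_hasDerivAt_dot {x y : ℝ → Fin n → ℝ} {x' y' : Fin n → ℝ} {t : ℝ}
    (hx : HasDerivAt x x' t) (hy : HasDerivAt y y' t) :
    HasDerivAt (fun s => x s ⬝ᵥ y s) (x' ⬝ᵥ y t + x t ⬝ᵥ y') t := by
  rw [hasDerivAt_pi] at hx hy
  simpa [dotProduct, Finset.sum_add_distrib] using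
    HasDerivAt.fun_sum (fun i _ => ((hx i).mul (hy i)))

lemma my_flow_deriv (M : Matrix (Fin n) (Fin n) ℝ) (y : Fin n → ℝ) (t : ℝ) :
    HasDerivAt (fun s => exp (s • M) *ᵥ y) (M *ᵥ (exp (t • M) *ᵥ y)) t := by
  have h := hasDerivAt_exp_smul_const' M t
  have hentry : ∀ i j, HasDerivAt (fun s => exp (s • M) i j) ((M * exp (t • M)) i j) t := by
    intro i j
    have hL := (LinearMap.toContinuousLinearMap
      (Matrix.entryLinearMap ℝ ℝ i j)).hasFDerivAt (x := exp (t • M))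
    exact hL.comp_hasDerivAt t h
  rw [hasDerivAt_pi]
  intro i
  have := HasDerivAt.fun_sum (fun j (_ : j ∈ Finset.univ) => (hentry i j).mul_const (y j))
  have heq : (M *ᵥ (exp (t • M) *ᵥ y)) i = ∑ j, (M * exp (t • M)) i j * y j := by
    simp [mulVec, dotProduct, Matrix.mul_apply, Finset.mul_sum, Finset.sum_mul, mul_assoc]; rw [Finset.sum_comm]
  rw [heq]
  simpa [mulVec, dotProduct] using this

end aux

section aux2
variable {n : ℕ}

lemma my_entry_deriv {N : ℝ → Matrix (Fin n) (Fin n) ℝ} {N' : Matrix (Fin n) (Fin n) ℝ}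
    {t : ℝ} (hN : HasDerivAt N N' t) (i : Fin n) (j : Fin n) :
    HasDerivAt (fun s => N s i j) (N' i j) t :=
  ((LinearMap.toContinuousLinearMap (Matrix.entryLinearMap ℝ ℝ i j)).hasFDerivAt).comp_hasDerivAt
    t hN

lemma my_hasDerivAt_matvec {N : ℝ → Matrix (Fin n) (Fin n) ℝ} {N' : Matrix (Fin n) (Fin n) ℝ}
    {x : ℝ → Fin n → ℝ} {x' : Fin n → ℝ} {t : ℝ}
    (hN : HasDerivAt N N' t) (hx : HasDerivAt x x' t) :
    HasDerivAt (fun s => N s *ᵥ x s) (N' *ᵥ x t + N t *ᵥ x') t := by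
  rw [hasDerivAt_pi] at hx ⊢
  intro i
  have := HasDerivAt.fun_sum (fun j (_ : j ∈ Finset.univ) => (my_entry_deriv hN i j).mul (hx j))
  simpa [mulVec, dotProduct, Finset.sum_add_distrib] using this

lemma my_closed_form (M : Matrix (Fin n) (Fin n) ℝ) (ε : ℝ → Fin n → ℝ)
    (hε : ∀ t, HasDerivAt ε (M *ᵥ ε t) t) (t : ℝ) :
    ε t = exp (t • M) *ᵥ ε 0 := by
  have hcomm : ∀ s : ℝ, Commute (exp (s • M)) M := fun s =>
    (((Commute.refl M).smul_left s).exp_left)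
  set g : ℝ → Fin n → ℝ := fun s => exp ((-s) • M) *ᵥ ε s with hg
  have hgderiv : ∀ s, HasDerivAt g 0 s := by
    intro s
    have hE : HasDerivAt (fun u : ℝ => exp ((-u) • M))
        ((-1 : ℝ) • (M * exp ((-s) • M))) s := by
      have h1 := hasDerivAt_exp_smul_const' M (-s)
      have h2 : HasDerivAt (fun u : ℝ => -u) (-1) s := (hasDerivAt_id s).neg
      exact h1.scomp s h2
    have := my_hasDerivAt_matvec hE (hε s)
    have hzero : ((-1 : ℝ) • (M * exp ((-s) • M))) *ᵥ ε s
        + exp ((-s) • M) *ᵥ (M *ᵥ ε s) = 0 := by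
      rw [mulVec_mulVec, ← (hcomm (-s)).eq]
      simp [Matrix.smul_mulVec, Matrix.neg_mulVec]
    rwa [hzero] at this
  have hconst : g t = g 0 := by
    have hdiff : Differentiable ℝ g := fun s => (hgderiv s).differentiableAt
    have hfd : ∀ s, fderiv ℝ g s = 0 := by
      intro s
      have h0 : (ContinuousLinearMap.toSpanSingleton ℝ (0 : Fin n → ℝ)) = 0 := by
        ext v; simp
      rw [(hgderiv s).hasFDerivAt.fderiv, h0]
    exact is_const_of_fderiv_eq_zero hdiff hfd t 0
  have hg0 : g 0 = ε 0 := by simp [hg]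
  have hcancel : exp (t • M) * exp ((-t) • M) = 1 := by
    rw [← Matrix.exp_add_of_commute _ _ (((Commute.refl M).smul_left t).smul_right (-t))]
    have : t • M + (-t) • M = 0 := by rw [← add_smul]; simp
    rw [this, exp_zero]
  calc ε t = (exp (t • M) * exp ((-t) • M)) *ᵥ ε t := by rw [hcancel, one_mulVec]
    _ = exp (t • M) *ᵥ g t := by rw [← mulVec_mulVec]
    _ = exp (t • M) *ᵥ ε 0 := by rw [hconst, hg0]

lemma my_shift (M : Matrix (Fin n) (Fin n) ℝ) (ε : ℝ → Fin n → ℝ)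
    (hε : ∀ t, HasDerivAt ε (M *ᵥ ε t) t) (t s : ℝ) :
    ε (t + s) = exp (s • M) *ᵥ ε t := by
  rw [my_closed_form M ε hε (t + s), my_closed_form M ε hε t, mulVec_mulVec,
    ← Matrix.exp_add_of_commute _ _ (((Commute.refl M).smul_left s).smul_right t)]
  rw [← add_smul, add_comm s t]

end aux2

section quad
variable {n p : ℕ}

lemma my_cont_mulVec {m : ℕ} (Q : Matrix (Fin m) (Fin n) ℝ) :
    Continuous fun x : Fin n → ℝ => Q *ᵥ x := by
  apply continuous_pi
  intro i
  simp only [mulVec, dotProduct]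
  exact continuous_finset_sum _ fun j _ => continuous_const.mul (continuous_apply j)

lemma my_cont_V (P : Matrix (Fin n) (Fin n) ℝ) :
    Continuous fun x : Fin n → ℝ => x ⬝ᵥ P *ᵥ x := by
  simp only [dotProduct, mulVec]
  exact continuous_finset_sum _ fun i _ => (continuous_apply i).mul
    (continuous_finset_sum _ fun j _ => continuous_const.mul (continuous_apply j))

lemma my_posdef_apply {P : Matrix (Fin n) (Fin n) ℝ} (hP : P.PosDef)
    {x : Fin n → ℝ} (hx : x ≠ 0) : 0 < x ⬝ᵥ P *ᵥ x := by
  simpa using hP.dotProduct_mulVec_pos hx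

lemma my_smul_quad (P : Matrix (Fin n) (Fin n) ℝ) (c : ℝ) (x : Fin n → ℝ) :
    (c • x) ⬝ᵥ P *ᵥ (c • x) = c * c * (x ⬝ᵥ P *ᵥ x) := by
  rw [Matrix.mulVec_smul, smul_dotProduct, dotProduct_smul]
  simp [smul_smul, mul_assoc]

lemma my_coercive {P : Matrix (Fin n) (Fin n) ℝ} (hP : P.PosDef) :
    ∃ m > 0, ∀ x : Fin n → ℝ, m * ‖x‖ ^ 2 ≤ x ⬝ᵥ P *ᵥ x := by
  rcases Nat.eq_zero_or_pos n with hn | hn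
  · refine ⟨1, one_pos, fun x => ?_⟩
    subst hn
    have hx : x = 0 := funext fun i => absurd i.2 (by simp)
    have h1 : (1 : ℝ) * ‖x‖ ^ 2 = 0 := by rw [hx, norm_zero]; ring
    rw [h1, hx]
    simp
  · have hsne : (Metric.sphere (0 : Fin n → ℝ) 1).Nonempty := by
      refine ⟨fun _ => 1, ?_⟩
      have : Nonempty (Fin n) := ⟨⟨0, hn⟩⟩
      simp [Metric.mem_sphere, dist_zero_right, pi_norm_const]
    obtain ⟨x₀, hx₀S, hmin⟩ := (isCompact_sphere (0 : Fin n → ℝ) 1).exists_isMinOn hsne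
      ((my_cont_V P).continuousOn)
    have hx₀norm : ‖x₀‖ = 1 := by simpa [Metric.mem_sphere, dist_zero_right] using hx₀S
    have hx₀ne : x₀ ≠ 0 := by intro h; rw [h] at hx₀norm; simp at hx₀norm
    refine ⟨x₀ ⬝ᵥ P *ᵥ x₀, my_posdef_apply hP hx₀ne, fun x => ?_⟩
    rcases eq_or_ne x 0 with rfl | hx
    · simp
    · have hxn : ‖x‖ ≠ 0 := norm_ne_zero_iff.mpr hx
      set u : Fin n → ℝ := ‖x‖⁻¹ • x with hu
      have hun : ‖u‖ = 1 := by
        rw [hu, norm_smul]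
        simp [abs_of_nonneg (inv_nonneg.mpr (norm_nonneg x)), inv_mul_cancel₀ hxn]
      have huS : u ∈ Metric.sphere (0 : Fin n → ℝ) 1 := by
        simp [Metric.mem_sphere, dist_zero_right, hun]
      have h1 := hmin huS
      have h2 : x ⬝ᵥ P *ᵥ x = ‖x‖ ^ 2 * (u ⬝ᵥ P *ᵥ u) := by
        rw [hu, my_smul_quad]
        field_simp
      rw [h2, mul_comm (x₀ ⬝ᵥ P *ᵥ x₀) (‖x‖ ^ 2)]
      exact mul_le_mul_of_nonneg_left h1 (sq_nonneg ‖x‖)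

end quad

section alg
variable {n p : ℕ}

lemma my_CtC_quad (C : Matrix (Fin p) (Fin n) ℝ) (x : Fin n → ℝ) :
    x ⬝ᵥ (Cᵀ * C) *ᵥ x = (C *ᵥ x) ⬝ᵥ (C *ᵥ x) := by
  rw [← mulVec_mulVec, dotProduct_mulVec, vecMul_transpose]

lemma my_identity (P A : Matrix (Fin n) (Fin n) ℝ) (C : Matrix (Fin p) (Fin n) ℝ)
    (hP : P.PosDef) (α : ℝ) :
    P * (A - α • (P⁻¹ * Cᵀ * C)) + (A - α • (P⁻¹ * Cᵀ * C))ᵀ * P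
      = (P * A + Aᵀ * P) - (α • (Cᵀ * C) + α • (Cᵀ * C)) := by
  have hdet : IsUnit P.det := isUnit_iff_ne_zero.mpr hP.det_pos.ne'
  have h1 : P * P⁻¹ = 1 := Matrix.mul_nonsing_inv P hdet
  have h2 : P⁻¹ * P = 1 := Matrix.nonsing_inv_mul P hdet
  have hPt : Pᵀ = P := by
    have := hP.1
    rwa [Matrix.IsHermitian, conjTranspose_eq_transpose_of_trivial] at this
  have h3 : (P⁻¹)ᵀ = P⁻¹ := by rw [Matrix.transpose_nonsing_inv, hPt]
  have e1 : P * (α • (P⁻¹ * Cᵀ * C)) = α • (Cᵀ * C) := by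
    rw [Matrix.mul_smul, ← Matrix.mul_assoc P (P⁻¹ * Cᵀ) C,
      ← Matrix.mul_assoc P P⁻¹ Cᵀ, h1, Matrix.one_mul]
  have e2 : (α • (P⁻¹ * Cᵀ * C))ᵀ * P = α • (Cᵀ * C) := by
    rw [Matrix.transpose_smul, Matrix.transpose_mul, Matrix.transpose_mul, h3,
      Matrix.transpose_transpose, Matrix.smul_mul]
    congr 1
    rw [Matrix.mul_assoc Cᵀ (C * P⁻¹) P, Matrix.mul_assoc C P⁻¹ P, h2, Matrix.mul_one]
  rw [Matrix.mul_sub, e1, Matrix.transpose_sub, Matrix.sub_mul, e2]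
  abel

end alg

/-- dissipativity plus detectability imply that every solution of
ε̇ = (A - αP⁻¹C'C)ε with α > 0 converges to 0. -/
theorem stmt2 {n p : ℕ}
    (P A : Matrix (Fin n) (Fin n) ℝ) (C : Matrix (Fin p) (Fin n) ℝ)
    (hP : P.PosDef)
    (hdiss : ∀ x : Fin n → ℝ, x ⬝ᵥ (P * A + Aᵀ * P) *ᵥ x ≤ 0)
    (hdet : ∀ ω : ℝ → Fin n → ℝ,
      (∀ t, HasDerivAt ω (A *ᵥ ω t) t) →
      (∀ t, 0 ≤ t → C *ᵥ ω t = 0) →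
      Tendsto ω atTop (𝓝 0))
    (α : ℝ) (hα : 0 < α)
    (ε : ℝ → Fin n → ℝ)
    (hε : ∀ t, HasDerivAt ε ((A - α • (P⁻¹ * Cᵀ * C)) *ᵥ ε t) t) :
    Tendsto ε atTop (𝓝 0) := by
  set M : Matrix (Fin n) (Fin n) ℝ := A - α • (P⁻¹ * Cᵀ * C) with hMdef
  obtain ⟨m, hm, hcoer⟩ := my_coercive hP
  set V : (Fin n → ℝ) → ℝ := fun x => x ⬝ᵥ P *ᵥ x with hVdef
  have hVnonneg : ∀ x, 0 ≤ V x := fun x => le_trans (by positivity) (hcoer x)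
  have hdotself : ∀ (q : ℕ) (w : Fin q → ℝ), 0 ≤ w ⬝ᵥ w := fun q w =>
    Finset.sum_nonneg fun i _ => mul_self_nonneg (w i)
  set Q : Matrix (Fin n) (Fin n) ℝ := P * M + Mᵀ * P with hQdef
  have hQform : ∀ x : Fin n → ℝ, x ⬝ᵥ Q *ᵥ x
      = x ⬝ᵥ (P * A + Aᵀ * P) *ᵥ x - (α * ((C *ᵥ x) ⬝ᵥ (C *ᵥ x)) + α * ((C *ᵥ x) ⬝ᵥ (C *ᵥ x))) := by
    intro x
    rw [hQdef, hMdef, my_identity P A C hP α, Matrix.sub_mulVec, dotProduct_sub]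
    congr 1
    rw [Matrix.add_mulVec, dotProduct_add, Matrix.smul_mulVec, dotProduct_smul,
      my_CtC_quad, smul_eq_mul]
  have hQnonpos : ∀ x, x ⬝ᵥ Q *ᵥ x ≤ 0 := by
    intro x
    rw [hQform]
    have h1 := hdiss x
    have h2 : 0 ≤ α * ((C *ᵥ x) ⬝ᵥ (C *ᵥ x)) :=
      mul_nonneg hα.le (hdotself p _)
    linarith
  have hQzero : ∀ x, x ⬝ᵥ Q *ᵥ x = 0 → C *ᵥ x = 0 := by
    intro x hx
    rw [hQform] at hx
    have h1 := hdiss x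
    have h2 := hdotself p (C *ᵥ x)
    have h3 : (C *ᵥ x) ⬝ᵥ (C *ᵥ x) = 0 := by nlinarith
    exact dotProduct_self_eq_zero.mp h3
  -- derivative of V along solutions of x' = M x
  have hVd : ∀ (x : ℝ → Fin n → ℝ), (∀ s, HasDerivAt x (M *ᵥ x s) s) →
      ∀ t, HasDerivAt (fun s => V (x s)) (x t ⬝ᵥ Q *ᵥ x t) t := by
    intro x hx t
    have h := my_hasDerivAt_dot (hx t) (my_hasDerivAt_mulVec P (hx t))
    have heq : (M *ᵥ x t) ⬝ᵥ (P *ᵥ x t) + x t ⬝ᵥ (P *ᵥ (M *ᵥ x t)) = x t ⬝ᵥ Q *ᵥ x t := by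
      rw [hQdef, Matrix.add_mulVec, dotProduct_add]
      have hA : x t ⬝ᵥ (P *ᵥ (M *ᵥ x t)) = x t ⬝ᵥ (P * M) *ᵥ x t := by
        rw [← Matrix.mulVec_mulVec]
      have hB : (M *ᵥ x t) ⬝ᵥ (P *ᵥ x t) = x t ⬝ᵥ (Mᵀ * P) *ᵥ x t := by
        conv_rhs => rw [← Matrix.mulVec_mulVec, Matrix.dotProduct_mulVec,
          Matrix.vecMul_transpose]
      rw [hA, hB]
      ring
    exact heq ▸ h
  have hεM : ∀ t, HasDerivAt ε (M *ᵥ ε t) t := hε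
  set f : ℝ → ℝ := fun s => V (ε s) with hfdef
  have hfd : ∀ t, HasDerivAt f (ε t ⬝ᵥ Q *ᵥ ε t) t := hVd ε hεM
  have hanti : Antitone f :=
    antitone_of_deriv_nonpos (fun t => (hfd t).differentiableAt)
      (fun t => by rw [(hfd t).deriv]; exact hQnonpos _)
  have hbdd : BddBelow (Set.range f) := by
    refine ⟨0, ?_⟩
    rintro y ⟨t, rfl⟩
    exact hVnonneg _
  set c : ℝ := ⨅ t, f t with hcdef
  have htendc : Tendsto f atTop (𝓝 c) := tendsto_atTop_ciInf hanti hbdd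
  -- boundedness of the trajectory at integer times
  set R : ℝ := Real.sqrt (f 0 / m) with hRdef
  have hball : ∀ k : ℕ, ε k ∈ Metric.closedBall (0 : Fin n → ℝ) R := by
    intro k
    rw [Metric.mem_closedBall, dist_zero_right, hRdef]
    have h1 : m * ‖ε k‖ ^ 2 ≤ f k := hcoer (ε k)
    have h2 : f k ≤ f 0 := hanti (Nat.cast_nonneg k)
    rw [Real.le_sqrt (norm_nonneg _) (div_nonneg (hVnonneg _) hm.le), le_div_iff₀ hm, mul_comm]
    linarith
  obtain ⟨y, -, φ, hφ, hyconv⟩ :=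
    tendsto_subseq_of_bounded Metric.isBounded_closedBall (x := fun k : ℕ => ε k) hball
  have hφtop : Tendsto (fun j => (φ j : ℝ)) atTop atTop :=
    tendsto_natCast_atTop_atTop.comp hφ.tendsto_atTop
  set v : ℝ → Fin n → ℝ := fun s => exp (s • M) *ᵥ y with hvdef
  have hv : ∀ s, HasDerivAt v (M *ᵥ v s) s := fun s => my_flow_deriv M y s
  have hconv' : ∀ s : ℝ, Tendsto (fun j => ε ((φ j : ℝ) + s)) atTop (𝓝 (v s)) := by
    intro s
    have h1 : Tendsto (fun j => exp (s • M) *ᵥ ε (φ j)) atTop (𝓝 (v s)) :=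
      ((my_cont_mulVec (exp (s • M))).tendsto y).comp hyconv
    have h2 : ∀ j, ε ((φ j : ℝ) + s) = exp (s • M) *ᵥ ε (φ j) := fun j =>
      my_shift M ε hεM (φ j : ℝ) s
    simpa only [h2] using h1
  have hVc : ∀ s, V (v s) = c := by
    intro s
    have h1 : Tendsto (fun j => f ((φ j : ℝ) + s)) atTop (𝓝 c) :=
      htendc.comp (tendsto_atTop_add_const_right atTop s hφtop)
    have h2 : Tendsto (fun j => V (ε ((φ j : ℝ) + s))) atTop (𝓝 (V (v s))) :=
      ((my_cont_V P).tendsto (v s)).comp (hconv' s)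
    exact tendsto_nhds_unique h2 h1
  have hQv : ∀ s, v s ⬝ᵥ Q *ᵥ v s = 0 := by
    intro s
    have hW := hVd v hv s
    have hWc : (fun u => V (v u)) = fun _ => c := funext hVc
    rw [hWc] at hW
    exact hW.unique (hasDerivAt_const s c)
  have hCv : ∀ s, C *ᵥ v s = 0 := fun s => hQzero _ (hQv s)
  have hvA : ∀ s, HasDerivAt v (A *ᵥ v s) s := by
    intro s
    have h0 := hv s
    have h1 : M *ᵥ v s = A *ᵥ v s := by
      rw [hMdef, Matrix.sub_mulVec, Matrix.smul_mulVec, Matrix.mul_assoc,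
        ← Matrix.mulVec_mulVec, ← Matrix.mulVec_mulVec, hCv s, Matrix.mulVec_zero,
        Matrix.mulVec_zero]
      simp
    rwa [h1] at h0
  have hv0 : Tendsto v atTop (𝓝 0) := hdet v hvA (fun t _ => hCv t)
  have hc0 : c = 0 := by
    have h1 : Tendsto (fun s => V (v s)) atTop (𝓝 (V 0)) :=
      ((my_cont_V P).tendsto 0).comp hv0
    have h2 : Tendsto (fun s => V (v s)) atTop (𝓝 c) := by
      have : (fun s => V (v s)) = fun _ => c := funext hVc
      rw [this]
      exact tendsto_const_nhds
    have h3 : c = V 0 := tendsto_nhds_unique h2 h1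
    rw [h3, hVdef]
    simp
  rw [hc0] at htendc
  have hsq : Tendsto (fun t => ‖ε t‖ ^ 2) atTop (𝓝 0) := by
    have hub : ∀ t, ‖ε t‖ ^ 2 ≤ f t / m := by
      intro t
      rw [le_div_iff₀ hm, mul_comm]
      exact hcoer (ε t)
    have hdiv : Tendsto (fun t => f t / m) atTop (𝓝 0) := by
      have := htendc.div_const m
      simpa using this
    exact squeeze_zero (fun t => sq_nonneg _) hub hdiv
  have hnorm : Tendsto (fun t => ‖ε t‖) atTop (𝓝 0) := by
    have h1 := (Real.continuous_sqrt.tendsto 0).comp hsq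
    have h2 : Tendsto (fun t => Real.sqrt (‖ε t‖ ^ 2)) atTop (𝓝 0) := by
      simp only [Function.comp_def, Real.sqrt_zero] at h1
      exact h1
    exact Filter.Tendsto.congr (fun t => Real.sqrt_sq (norm_nonneg _)) h2
  exact tendsto_zero_iff_norm_tendsto_zero.mpr hnorm
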